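/- Let v_{j,n} be the number of binary rooted planar trees with n internal nodes (each internal node having exactly two children) whose largest caterpillar subtree has at most j internal nodes. Then the generating function P_j(x) = Σ_{n≥0} v_{j,n} x^n satisfies P_j = 1 + x·P_j² − 2^j·x^{j+1}. -/

import Mathlib

/-- Binary rooted planar trees in which every internal node has exactly two
children. -/
inductive BTree where
  | leaf : BTree
  | node : BTree → BTree → BTree

/-- The size of a tree: its number of internal nodes. -/
def BTree.size : BTree → ℕ
  | .leaf => 0
  | .node l r => l.size + r.size + 1

/-- A tree is a caterpillar if every node is a leaf or has at least one leaf as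
a child. -/
def BTree.IsCat : BTree → Prop
  | .leaf => True
  | .node l r => (l = .leaf ∨ r = .leaf) ∧ l.IsCat ∧ r.IsCat

/-- The list of all subtrees of a tree (each rooted at a node or leaf of the
tree). -/
def BTree.subtrees : BTree → List BTree
  | .leaf => [.leaf]
  | .node l r => .node l r :: (l.subtrees ++ r.subtrees)

/-- `v j n`: the number of binary trees with `n` internal nodes whose largest
caterpillar subtree has at most `j` internal nodes. -/
noncomputable def v (j n : ℕ) : ℕ :=
  Nat.card {t : BTree // t.size = n ∧ ∀ s ∈ t.subtrees, s.IsCat → s.size ≤ j}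

deriving instance DecidableEq for BTree

instance decIsCat : (t : BTree) → Decidable t.IsCat
  | .leaf => Decidable.isTrue trivial
  | .node l r =>
      haveI := decIsCat l; haveI := decIsCat r
      decidable_of_iff ((l = .leaf ∨ r = .leaf) ∧ l.IsCat ∧ r.IsCat) Iff.rfl

/-- all caterpillar subtrees have size ≤ j -/
def Good (j : ℕ) (t : BTree) : Prop := ∀ s ∈ t.subtrees, s.IsCat → s.size ≤ j

instance (j : ℕ) (t : BTree) : Decidable (Good j t) := by unfold Good; infer_instance

def Tr : ℕ → Finset BTree
  | 0 => {BTree.leaf}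
  | n+1 => (Finset.HasAntidiagonal.antidiagonal n).attach.biUnion
      (fun p => Finset.image₂ BTree.node (Tr p.1.1) (Tr p.1.2))
decreasing_by
  · have := Finset.HasAntidiagonal.antidiagonal.fst_le p.2; omega
  · have := Finset.HasAntidiagonal.antidiagonal.snd_le p.2; omega

lemma mem_Tr : ∀ (t : BTree) (n : ℕ), t ∈ Tr n ↔ t.size = n := by
  intro t
  induction t with
  | leaf =>
      intro n; cases n with
      | zero => simp [Tr, BTree.size]
      | succ m => simp [Tr, BTree.size, eq_comm]
  | node l r ihl ihr =>
      intro n; cases n with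
      | zero => simp [Tr, BTree.size]
      | succ m =>
          rw [Tr]
          simp only [Finset.mem_biUnion, Finset.mem_image₂, Finset.mem_attach, true_and,
            BTree.size]
          constructor
          · rintro ⟨⟨⟨a, b⟩, hab⟩, x, hx, y, hy, h⟩
            cases h
            dsimp only at hx hy
            rw [ihl] at hx; rw [ihr] at hy
            simp only [Finset.HasAntidiagonal.mem_antidiagonal] at hab
            omega
          · intro h
            exact ⟨⟨(l.size, r.size), by simp only [Finset.HasAntidiagonal.mem_antidiagonal]; omega⟩,
              l, (ihl _).2 rfl, r, (ihr _).2 rfl, rfl⟩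

lemma self_mem_subtrees (t : BTree) : t ∈ t.subtrees := by
  cases t <;> simp [BTree.subtrees]

lemma size_le_of_mem_subtrees : ∀ (t s : BTree), s ∈ t.subtrees → s.size ≤ t.size := by
  intro t
  induction t with
  | leaf => intro s hs; simp [BTree.subtrees] at hs; subst hs; rfl
  | node l r ihl ihr =>
      intro s hs
      simp only [BTree.subtrees, List.mem_cons, List.mem_append] at hs
      rcases hs with h | h | h
      · subst h; rfl
      · have := ihl s h; simp [BTree.size]; omega
      · have := ihr s h; simp [BTree.size]; omega

lemma good_node (j : ℕ) (l r : BTree) :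
    Good j (.node l r) ↔
      ((BTree.node l r).IsCat → l.size + r.size + 1 ≤ j) ∧ Good j l ∧ Good j r := by
  constructor
  · intro h
    refine ⟨fun hc => h _ (self_mem_subtrees _) hc, fun s hs => ?_, fun s hs => ?_⟩
    · exact h s (by simp [BTree.subtrees, hs])
    · exact h s (by simp [BTree.subtrees, hs])
  · rintro ⟨h0, hl, hr⟩ s hs hc
    simp only [BTree.subtrees, List.mem_cons, List.mem_append] at hs
    rcases hs with h | h | h
    · subst h; exact h0 hc
    · exact hl s h hc
    · exact hr s h hc

lemma good_leaf (j : ℕ) : Good j .leaf := by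
  intro s hs _
  simp [BTree.subtrees] at hs; subst hs; exact Nat.zero_le _

/-- caterpillar of positive size: one child is a leaf, the other is a caterpillar -/
lemma cat_count : ∀ n : ℕ, ((Tr (n+1)).filter (fun t => t.IsCat)).card = 2 ^ n := by
  intro n
  induction n with
  | zero =>
      have : (Tr 1).filter (fun t => t.IsCat) = {BTree.node .leaf .leaf} := by
        apply Finset.ext
        intro t
        simp only [Finset.mem_filter, mem_Tr, Finset.mem_singleton]
        constructor
        · rintro ⟨h1, h2⟩
          cases t with
          | leaf => simp [BTree.size] at h1
          | node l r =>
              simp only [BTree.size] at h1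
              have hl : l.size = 0 := by omega
              have hr : r.size = 0 := by omega
              cases l with
              | leaf => cases r with
                | leaf => rfl
                | node a b => simp [BTree.size] at hr
              | node a b => simp [BTree.size] at hl
        · rintro rfl
          exact ⟨rfl, by constructor <;> simp [BTree.IsCat]⟩
      rw [this]; rfl
  | succ k ih =>
      have hset : (Tr (k+2)).filter (fun t => t.IsCat) =
          ((Tr (k+1)).filter (fun t => t.IsCat)).image (fun s => BTree.node .leaf s) ∪
          ((Tr (k+1)).filter (fun t => t.IsCat)).image (fun s => BTree.node s .leaf) := by
        apply Finset.ext
        intro t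
        simp only [Finset.mem_filter, mem_Tr, Finset.mem_union, Finset.mem_image]
        constructor
        · rintro ⟨h1, h2⟩
          cases t with
          | leaf => simp [BTree.size] at h1
          | node l r =>
              obtain ⟨hlr, hl, hr⟩ := h2
              simp only [BTree.size] at h1
              rcases hlr with rfl | rfl
              · left; exact ⟨r, ⟨by simp [BTree.size] at h1 ⊢; omega, hr⟩, rfl⟩
              · right; exact ⟨l, ⟨by simp [BTree.size] at h1 ⊢; omega, hl⟩, rfl⟩
        · rintro (⟨s, ⟨hs1, hs2⟩, rfl⟩ | ⟨s, ⟨hs1, hs2⟩, rfl⟩)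
          · exact ⟨by simp [BTree.size]; omega, Or.inl rfl, trivial, hs2⟩
          · exact ⟨by simp [BTree.size]; omega, Or.inr rfl, hs2, trivial⟩
      rw [hset, Finset.card_union_of_disjoint, Finset.card_image_of_injective,
        Finset.card_image_of_injective, ih]
      · ring
      · intro a b h; cases h; rfl
      · intro a b h; cases h; rfl
      · rw [Finset.disjoint_left]
        intro t ht1 ht2
        simp only [Finset.mem_image, Finset.mem_filter, mem_Tr] at ht1 ht2
        obtain ⟨s, ⟨hs1, _⟩, rfl⟩ := ht1
        obtain ⟨u, ⟨hu1, _⟩, h⟩ := ht2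
        cases h
        simp [BTree.size] at hs1

lemma good_of_size_le {j : ℕ} {t : BTree} (h : t.size ≤ j) : Good j t :=
  fun s hs _ => le_trans (size_le_of_mem_subtrees t s hs) h

lemma node_inj2 : Function.Injective2 BTree.node := by
  intro a b c d h; cases h; exact ⟨rfl, rfl⟩

lemma v_eq (j n : ℕ) : v j n = ((Tr n).filter (fun t => Good j t)).card := by
  rw [v]
  have e : {t : BTree // t.size = n ∧ ∀ s ∈ t.subtrees, s.IsCat → s.size ≤ j} ≃
      {t : BTree // t ∈ (Tr n).filter (fun t => Good j t)} := by
    apply Equiv.subtypeEquivRight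
    intro t
    simp only [Finset.mem_filter, mem_Tr]
    rfl
  rw [Nat.card_congr e, Nat.card_eq_fintype_card, Fintype.card_coe]

lemma v_zero (j : ℕ) : v j 0 = 1 := by
  rw [v_eq]
  have : (Tr 0).filter (fun t => Good j t) = {BTree.leaf} := by
    apply Finset.ext
    intro t
    simp only [Finset.mem_filter, mem_Tr, Finset.mem_singleton]
    constructor
    · rintro ⟨h1, _⟩
      cases t with
      | leaf => rfl
      | node l r => simp [BTree.size] at h1
    · rintro rfl
      exact ⟨rfl, good_leaf j⟩
  rw [this]; rfl

lemma v_rec (j m : ℕ) (hj : 1 ≤ j) :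
    v j (m + 1) + (if m = j then 2 ^ j else 0) =
      ∑ p ∈ Finset.HasAntidiagonal.antidiagonal m, v j p.1 * v j p.2 := by
  classical
  set A : Finset BTree := (Finset.HasAntidiagonal.antidiagonal m).biUnion
    (fun p => Finset.image₂ BTree.node ((Tr p.1).filter (fun t => Good j t))
      ((Tr p.2).filter (fun t => Good j t))) with hA
  have memA : ∀ t : BTree, t ∈ A ↔
      ∃ l r, t = BTree.node l r ∧ l.size + r.size = m ∧ Good j l ∧ Good j r := by
    intro t
    simp only [hA, Finset.mem_biUnion, Finset.mem_image₂, Finset.mem_filter, mem_Tr,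
      Finset.HasAntidiagonal.mem_antidiagonal, Prod.exists]
    constructor
    · rintro ⟨a, b, hab, x, ⟨hx1, hx2⟩, y, ⟨hy1, hy2⟩, rfl⟩
      exact ⟨x, y, rfl, by omega, hx2, hy2⟩
    · rintro ⟨l, r, rfl, hm, hl, hr⟩
      exact ⟨l.size, r.size, hm, l, ⟨rfl, hl⟩, r, ⟨rfl, hr⟩, rfl⟩
  have cardA : A.card = ∑ p ∈ Finset.HasAntidiagonal.antidiagonal m, v j p.1 * v j p.2 := by
    rw [hA, Finset.card_biUnion]
    · apply Finset.sum_congr rfl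
      intro p _
      rw [Finset.card_image₂ node_inj2, v_eq, v_eq]
    · rintro ⟨a, b⟩ h1 ⟨c, d⟩ h2 hne
      rw [Function.onFun, Finset.disjoint_left]
      intro t ht1 ht2
      simp only [Finset.mem_image₂, Finset.mem_filter, mem_Tr] at ht1 ht2
      obtain ⟨x, ⟨hx1, _⟩, y, ⟨hy1, _⟩, rfl⟩ := ht1
      obtain ⟨x', ⟨hx1', _⟩, y', ⟨hy1', _⟩, he⟩ := ht2
      obtain ⟨rfl, rfl⟩ := node_inj2 he
      exact hne (by simp only [Prod.mk.injEq]; omega)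
  have hsplit : ((Tr (m+1)).filter (fun t => Good j t)).card +
      (A.filter (fun t => ¬ (t.IsCat → t.size ≤ j))).card = A.card := by
    have hgf : (Tr (m+1)).filter (fun t => Good j t) =
        A.filter (fun t => t.IsCat → t.size ≤ j) := by
      apply Finset.ext
      intro t
      simp only [Finset.mem_filter, mem_Tr, memA]
      constructor
      · rintro ⟨h1, h2⟩
        cases t with
        | leaf => simp [BTree.size] at h1
        | node l r =>
            rw [good_node] at h2
            obtain ⟨h0, hl, hr⟩ := h2
            simp only [BTree.size] at h1 ⊢
            exact ⟨⟨l, r, rfl, by omega, hl, hr⟩, fun hc => h0 hc⟩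
      · rintro ⟨⟨l, r, rfl, hm, hl, hr⟩, h0⟩
        refine ⟨by simp [BTree.size]; omega, ?_⟩
        rw [good_node]
        exact ⟨fun hc => by simpa [BTree.size] using h0 hc, hl, hr⟩
    rw [hgf]
    exact Finset.card_filter_add_card_filter_not _
  have hbad : (A.filter (fun t => ¬ (t.IsCat → t.size ≤ j))).card =
      if m = j then 2 ^ j else 0 := by
    by_cases hmj : m = j
    · subst hmj
      rw [if_pos rfl, ← cat_count m]
      congr 1
      apply Finset.ext
      intro t
      simp only [Finset.mem_filter, memA, mem_Tr, _root_.not_imp, not_le]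
      constructor
      · rintro ⟨⟨l, r, rfl, hm, _, _⟩, hc, _⟩
        exact ⟨by simp [BTree.size]; omega, hc⟩
      · rintro ⟨h1, hc⟩
        cases t with
        | leaf => simp [BTree.size] at h1
        | node l r =>
            simp only [BTree.size] at h1
            refine ⟨⟨l, r, rfl, by omega, good_of_size_le (by omega),
              good_of_size_le (by omega)⟩, hc, by simp [BTree.size]; omega⟩
    · rw [if_neg hmj]
      rw [Finset.card_eq_zero]
      rw [Finset.filter_eq_empty_iff]
      rintro t ht
      rw [memA] at ht
      obtain ⟨l, r, rfl, hm, hl, hr⟩ := ht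
      simp only [not_not]
      rintro ⟨hlr, hcl, hcr⟩
      simp only [BTree.size]
      rcases hlr with rfl | rfl
      · have h2 := hr r (self_mem_subtrees r) hcr
        simp [BTree.size] at hm ⊢
        omega
      · have h2 := hl l (self_mem_subtrees l) hcl
        simp [BTree.size] at hm ⊢
        omega
  rw [v_eq]
  omega


open PowerSeries in
/-- The generating function `P_j(x) = Σ_n v_{j,n} xⁿ` satisfies
`P_j = 1 + x P_j² − 2^j x^{j+1}`. -/
theorem gf_caterpillar_bound (j : ℕ) (hj : 1 ≤ j) :
    (PowerSeries.mk fun n => (v j n : ℚ)) =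
      1 + X * (PowerSeries.mk fun n => (v j n : ℚ)) ^ 2
        - ((2 : ℚ) ^ j) • X ^ (j + 1) := by
  ext n
  rw [map_sub, map_add, PowerSeries.coeff_mk, PowerSeries.coeff_one, PowerSeries.coeff_smul,
    PowerSeries.coeff_X_pow, smul_eq_mul]
  cases n with
  | zero =>
      rw [PowerSeries.coeff_zero_X_mul, v_zero]
      have : ¬ (0 = j + 1) := by omega
      simp [this]
  | succ m =>
      rw [PowerSeries.coeff_succ_X_mul, sq, PowerSeries.coeff_mul]
      simp only [PowerSeries.coeff_mk]
      have hrec := v_rec j m hj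
      have hcast : ((v j (m+1) : ℚ)) + (if m = j then ((2:ℚ))^j else 0) =
          ∑ p ∈ Finset.HasAntidiagonal.antidiagonal m, (v j p.1 : ℚ) * (v j p.2 : ℚ) := by
        have := congrArg (fun k : ℕ => (k : ℚ)) hrec
        push_cast at this
        split_ifs at this ⊢ <;> push_cast at this ⊢ <;> linarith
      have hne : ¬ (m + 1 = 0) := by omega
      rw [if_neg hne]
      by_cases hmj : m = j
      · subst hmj
        rw [if_pos rfl] at hcast
        rw [if_pos rfl]
        linarith
      · rw [if_neg hmj] at hcast
        rw [if_neg (by omega : ¬ m + 1 = j + 1)]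
        linarith
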